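/- (Ehrenfeucht–Fraïssé game for hornALC.) For any finite vocabulary τ, any τ-structures 𝔄, 𝔅 with a ∈ dom(𝔄), b ∈ dom(𝔅), and any natural number ℓ: 𝔄,a ≤^ℓ_hornALC 𝔅,b if and only if 𝔄,{a} ⪯^ℓ_horn 𝔅,b. Consequently, 𝔄,a ≤_hornALC 𝔅,b if and only if 𝔄,{a} ⪯^ℓ_horn 𝔅,b for all ℓ. Moreover, if 𝔄 and 𝔅 are finite, then 𝔄,a ≤_hornALC 𝔅,b if and only if 𝔄,{a} ⪯_horn 𝔅,b. -/

import Mathlib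

/-- A τ-structure over domain `D`, for a vocabulary with concept names `Con`
(unary predicates) and role names `Rol` (binary predicates). -/
structure Str (Con Rol : Type) (D : Type) where
  conI : Con → Set D
  rolI : Rol → Set (D × D)

/-- ALC-concepts over the vocabulary `(Con, Rol)`. -/
inductive ALC (Con Rol : Type) where
  | top : ALC Con Rol
  | bot : ALC Con Rol
  | atomic : Con → ALC Con Rol
  | neg : ALC Con Rol → ALC Con Rol
  | disj : ALC Con Rol → ALC Con Rol → ALC Con Rol
  | conj : ALC Con Rol → ALC Con Rol → ALC Con Rol
  | impl : ALC Con Rol → ALC Con Rol → ALC Con Rol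
  | ex : Rol → ALC Con Rol → ALC Con Rol
  | all : Rol → ALC Con Rol → ALC Con Rol

variable {Con Rol D D1 D2 : Type}

/-- The extension `C^𝔄` of an ALC-concept in a structure. -/
def ALC.sem (M : Str Con Rol D) : ALC Con Rol → Set D
  | .top => Set.univ
  | .bot => ∅
  | .atomic A => M.conI A
  | .neg C => (C.sem M)ᶜ
  | .disj C C' => C.sem M ∪ C'.sem M
  | .conj C C' => C.sem M ∩ C'.sem M
  | .impl C C' => (C.sem M)ᶜ ∪ C'.sem M
  | .ex R C => {a | ∃ b, (a, b) ∈ M.rolI R ∧ b ∈ C.sem M}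
  | .all R C => {a | ∀ b, (a, b) ∈ M.rolI R → b ∈ C.sem M}

/-- The depth of an ALC-concept: maximal nesting of `∃R` and `∀R`. -/
def ALC.depth : ALC Con Rol → ℕ
  | .top | .bot | .atomic _ => 0
  | .neg C => C.depth
  | .disj C C' | .conj C C' | .impl C C' => max C.depth C'.depth
  | .ex _ C | .all _ C => C.depth + 1

/-- ELU-concepts: built from concept names and ⊤ using ⊓, ⊔ and ∃R only. -/
inductive ALC.IsELU : ALC Con Rol → Prop
  | top : IsELU .top
  | atomic (A : Con) : IsELU (.atomic A)
  | conj {C C' : ALC Con Rol} : IsELU C → IsELU C' → IsELU (.conj C C')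
  | disj {C C' : ALC Con Rol} : IsELU C → IsELU C' → IsELU (.disj C C')
  | ex (R : Rol) {C : ALC Con Rol} : IsELU C → IsELU (.ex R C)

/-- hornALC-concepts: `H ::= ⊥ | ⊤ | A | H⊓H' | L→H | ∃R.H | ∀R.H` with `L` an ELU-concept. -/
inductive ALC.IsHorn : ALC Con Rol → Prop
  | bot : IsHorn .bot
  | top : IsHorn .top
  | atomic (A : Con) : IsHorn (.atomic A)
  | conj {H H' : ALC Con Rol} : IsHorn H → IsHorn H' → IsHorn (.conj H H')
  | impl {L H : ALC Con Rol} : IsELU L → IsHorn H → IsHorn (.impl L H)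
  | ex (R : Rol) {H : ALC Con Rol} : IsHorn H → IsHorn (.ex R H)
  | all (R : Rol) {H : ALC Con Rol} : IsHorn H → IsHorn (.all R H)

/-- `S` is a simulation between `M` and `N`. -/
def IsSim (M : Str Con Rol D1) (N : Str Con Rol D2) (S : Set (D1 × D2)) : Prop :=
  ∀ a b, (a, b) ∈ S →
    (∀ A, a ∈ M.conI A → b ∈ N.conI A) ∧
    (∀ R a', (a, a') ∈ M.rolI R → ∃ b', (b, b') ∈ N.rolI R ∧ (a', b') ∈ S)

/-- `𝔄,a ⪯_sim 𝔅,b`: some simulation contains `(a,b)`. -/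
def Sim (M : Str Con Rol D1) (N : Str Con Rol D2) (a : D1) (b : D2) : Prop :=
  ∃ S, IsSim M N S ∧ (a, b) ∈ S

/-- The ℓ-round simulation relations `⪯^ℓ_sim`. -/
def SimL (M : Str Con Rol D1) (N : Str Con Rol D2) : ℕ → D1 → D2 → Prop
  | 0 => fun a b => ∀ A, a ∈ M.conI A → b ∈ N.conI A
  | ℓ + 1 => fun a b =>
      (∀ A, a ∈ M.conI A → b ∈ N.conI A) ∧
      ∀ R a', (a, a') ∈ M.rolI R → ∃ b', (b, b') ∈ N.rolI R ∧ SimL M N ℓ a' b'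

/-- `X R↑ Y`. -/
def relUp (R : Set (D1 × D1)) (X Y : Set D1) : Prop := ∀ a ∈ X, ∃ b ∈ Y, (a, b) ∈ R

/-- `X R↓ Y`. -/
def relDown (R : Set (D1 × D1)) (X Y : Set D1) : Prop := ∀ b ∈ Y, ∃ a ∈ X, (a, b) ∈ R

/-- `Z` is a Horn simulation between `M` and `N`. -/
def IsHornSim (M : Str Con Rol D1) (N : Str Con Rol D2) (Z : Set (Set D1 × D2)) : Prop :=
  ∀ X b, (X, b) ∈ Z →
    X.Nonempty ∧
    (∀ A, X ⊆ M.conI A → b ∈ N.conI A) ∧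
    (∀ R Y, relUp (M.rolI R) X Y →
        ∃ Y', Y' ⊆ Y ∧ ∃ b', (b, b') ∈ N.rolI R ∧ (Y', b') ∈ Z) ∧
    (∀ R b', (b, b') ∈ N.rolI R → ∃ Y, relDown (M.rolI R) X Y ∧ (Y, b') ∈ Z) ∧
    (∀ a ∈ X, Sim N M b a)

/-- `𝔄,X ⪯_horn 𝔅,b`: some Horn simulation contains `(X,b)`. -/
def HornSim (M : Str Con Rol D1) (N : Str Con Rol D2) (X : Set D1) (b : D2) : Prop :=
  ∃ Z, IsHornSim M N Z ∧ (X, b) ∈ Z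

/-- The ℓ-round Horn simulation relations `⪯^ℓ_horn`. -/
def HornSimL (M : Str Con Rol D1) (N : Str Con Rol D2) : ℕ → Set D1 → D2 → Prop
  | 0 => fun X b =>
      X.Nonempty ∧ (∀ A, X ⊆ M.conI A → b ∈ N.conI A) ∧ ∀ a ∈ X, SimL N M 0 b a
  | ℓ + 1 => fun X b =>
      (X.Nonempty ∧ (∀ A, X ⊆ M.conI A → b ∈ N.conI A) ∧ ∀ a ∈ X, SimL N M 0 b a) ∧
      (∀ R Y, relUp (M.rolI R) X Y →
          ∃ Y', Y' ⊆ Y ∧ ∃ b', (b, b') ∈ N.rolI R ∧ HornSimL M N ℓ Y' b') ∧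
      (∀ R b', (b, b') ∈ N.rolI R → ∃ Y, relDown (M.rolI R) X Y ∧ HornSimL M N ℓ Y b') ∧
      (∀ a ∈ X, SimL N M (ℓ + 1) b a)

/-- `𝔄,X ≤^ℓ_hornALC 𝔅,b`. -/
def leHornDepth (M : Str Con Rol D1) (N : Str Con Rol D2) (ℓ : ℕ) (X : Set D1) (b : D2) : Prop :=
  ∀ C : ALC Con Rol, C.IsHorn → C.depth ≤ ℓ → X ⊆ C.sem M → b ∈ C.sem N

/-- `𝔄,X ≤_hornALC 𝔅,b`. -/
def leHorn (M : Str Con Rol D1) (N : Str Con Rol D2) (X : Set D1) (b : D2) : Prop :=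
  ∀ C : ALC Con Rol, C.IsHorn → X ⊆ C.sem M → b ∈ C.sem N

/-- `𝔄,a ≤^ℓ_ELU 𝔅,b`. -/
def leELUDepth (M : Str Con Rol D1) (N : Str Con Rol D2) (ℓ : ℕ) (a : D1) (b : D2) : Prop :=
  ∀ C : ALC Con Rol, C.IsELU → C.depth ≤ ℓ → a ∈ C.sem M → b ∈ C.sem N

/-- `𝔄,a ≤_ELU 𝔅,b`. -/
def leELU (M : Str Con Rol D1) (N : Str Con Rol D2) (a : D1) (b : D2) : Prop :=
  ∀ C : ALC Con Rol, C.IsELU → a ∈ C.sem M → b ∈ C.sem N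

section Aux
variable {Con Rol D D1 D2 : Type}

/-- Conjunction of a list of concepts. -/
def conjList : List (ALC Con Rol) → ALC Con Rol
  | [] => .top
  | C :: l => .conj C (conjList l)

lemma conjList_sem (M : Str Con Rol D) (l : List (ALC Con Rol)) (d : D) :
    d ∈ (conjList l).sem M ↔ ∀ C ∈ l, d ∈ C.sem M := by
  induction l with
  | nil => simp [conjList, ALC.sem]
  | cons C l ih =>
      simp only [conjList, ALC.sem, Set.mem_inter_iff, ih, List.mem_cons]
      constructor
      · rintro ⟨h1, h2⟩ C' (rfl | h) ; exact h1; exact h2 _ h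
      · intro h; exact ⟨h C (Or.inl rfl), fun C' hC' => h C' (Or.inr hC')⟩

lemma conjList_depth (l : List (ALC Con Rol)) (n : ℕ) (h : ∀ C ∈ l, C.depth ≤ n) :
    (conjList l).depth ≤ n := by
  induction l with
  | nil => simp [conjList, ALC.depth]
  | cons C l ih =>
      simp only [conjList, ALC.depth, max_le_iff]
      exact ⟨h C (List.mem_cons_self), ih fun C' hC' => h C' (List.mem_cons_of_mem _ hC')⟩

lemma conjList_isELU (l : List (ALC Con Rol)) (h : ∀ C ∈ l, C.IsELU) :
    (conjList l).IsELU := by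
  induction l with
  | nil => exact .top
  | cons C l ih =>
      exact .conj (h C (List.mem_cons_self)) (ih fun C' hC' => h C' (List.mem_cons_of_mem _ hC'))

lemma conjList_isHorn (l : List (ALC Con Rol)) (h : ∀ C ∈ l, C.IsHorn) :
    (conjList l).IsHorn := by
  induction l with
  | nil => exact .top
  | cons C l ih =>
      exact .conj (h C (List.mem_cons_self)) (ih fun C' hC' => h C' (List.mem_cons_of_mem _ hC'))

/-- `SimL` is antitone in the number of rounds. -/
lemma simL_mono (M : Str Con Rol D1) (N : Str Con Rol D2) :
    ∀ {k l : ℕ}, k ≤ l → ∀ {a b}, SimL M N l a b → SimL M N k a b := by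
  intro k
  induction k with
  | zero => intro l _ a b h
            cases l with
            | zero => exact h
            | succ l => exact h.1
  | succ k ih =>
      intro l hkl a b h
      obtain ⟨l, rfl⟩ : ∃ l', l = l' + 1 := ⟨l - 1, by omega⟩
      exact ⟨h.1, fun R a' ha' => by
        obtain ⟨b', hb', hs⟩ := h.2 R a' ha'
        exact ⟨b', hb', ih (by omega) hs⟩⟩

/-- ELU-concepts of depth at most `ℓ` are preserved by `ℓ`-round simulations. -/
lemma elu_presL (N : Str Con Rol D2) (M : Str Con Rol D1) :
    ∀ {C : ALC Con Rol}, C.IsELU → ∀ {ℓ b a}, C.depth ≤ ℓ → SimL N M ℓ b a →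
      b ∈ C.sem N → a ∈ C.sem M := by
  intro C hC
  induction hC with
  | top => intro ℓ b a _ _ _; trivial
  | atomic A =>
      intro ℓ b a _ hs hb
      cases ℓ with
      | zero => exact hs A hb
      | succ l => exact hs.1 A hb
  | conj h1 h2 ih1 ih2 =>
      intro ℓ b a hd hs hb
      simp only [ALC.depth, max_le_iff] at hd
      exact ⟨ih1 hd.1 hs hb.1, ih2 hd.2 hs hb.2⟩
  | disj h1 h2 ih1 ih2 =>
      intro ℓ b a hd hs hb
      simp only [ALC.depth, max_le_iff] at hd
      rcases hb with hb | hb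
      · exact Or.inl (ih1 hd.1 hs hb)
      · exact Or.inr (ih2 hd.2 hs hb)
  | ex R h ih =>
      intro ℓ b a hd hs hb
      simp only [ALC.depth] at hd
      obtain ⟨ℓ, rfl⟩ : ∃ l', ℓ = l' + 1 := ⟨ℓ - 1, by omega⟩
      obtain ⟨b', hbb', hb'⟩ := hb
      obtain ⟨a', haa', hs'⟩ := hs.2 R b' hbb'
      exact ⟨a', haa', ih (by omega) hs' hb'⟩

/-- ELU-concepts are preserved by simulations. -/
lemma elu_pres (N : Str Con Rol D2) (M : Str Con Rol D1) :
    ∀ {C : ALC Con Rol}, C.IsELU → ∀ {b a}, Sim N M b a → b ∈ C.sem N → a ∈ C.sem M := by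
  intro C hC
  induction hC with
  | top => intro b a _ _; trivial
  | atomic A => rintro b a ⟨S, hS, hba⟩ hb; exact ((hS _ _ hba).1 A hb)
  | conj h1 h2 ih1 ih2 => intro b a hs hb; exact ⟨ih1 hs hb.1, ih2 hs hb.2⟩
  | disj h1 h2 ih1 ih2 =>
      intro b a hs hb
      rcases hb with hb | hb
      · exact Or.inl (ih1 hs hb)
      · exact Or.inr (ih2 hs hb)
  | ex R h ih =>
      rintro b a ⟨S, hS, hba⟩ ⟨b', hbb', hb'⟩
      obtain ⟨a', haa', hs'⟩ := (hS _ _ hba).2 R b' hbb'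
      exact ⟨a', haa', ih ⟨S, hS, hs'⟩ hb'⟩

/-- Basic facts from `HornSimL ℓ X b`. -/
lemma hornSimL_base (M : Str Con Rol D1) (N : Str Con Rol D2) {ℓ : ℕ} {X : Set D1} {b : D2}
    (h : HornSimL M N ℓ X b) :
    X.Nonempty ∧ (∀ A, X ⊆ M.conI A → b ∈ N.conI A) ∧ ∀ a ∈ X, SimL N M ℓ b a := by
  cases ℓ with
  | zero => exact h
  | succ l => exact ⟨h.1.1, h.1.2.1, h.2.2.2⟩

/-- Soundness: `ℓ`-round Horn simulations preserve hornALC-concepts of depth at most `ℓ`. -/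
lemma horn_soundL (M : Str Con Rol D1) (N : Str Con Rol D2) :
    ∀ {C : ALC Con Rol}, C.IsHorn → ∀ {ℓ} (X : Set D1) (b : D2), C.depth ≤ ℓ →
      HornSimL M N ℓ X b → X ⊆ C.sem M → b ∈ C.sem N := by
  intro C hC
  induction hC with
  | bot =>
      intro ℓ X b _ h hX
      obtain ⟨a, ha⟩ := (hornSimL_base M N h).1
      exact absurd (hX ha) (Set.notMem_empty a)
  | top => intro ℓ X b _ _ _; trivial
  | atomic A => intro ℓ X b _ h hX; exact (hornSimL_base M N h).2.1 A hX
  | conj h1 h2 ih1 ih2 =>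
      intro ℓ X b hd h hX
      simp only [ALC.depth, max_le_iff] at hd
      exact ⟨ih1 X b hd.1 h fun a ha => (hX ha).1, ih2 X b hd.2 h fun a ha => (hX ha).2⟩
  | @impl L H hL hH ih =>
      intro ℓ X b hd h hX
      simp only [ALC.depth, max_le_iff] at hd
      rw [ALC.sem]
      by_cases hb : b ∈ L.sem N
      · refine Or.inr (ih X b hd.2 h fun a ha => ?_)
        have hs := (hornSimL_base M N h).2.2 a ha
        have haL : a ∈ L.sem M := elu_presL N M hL hd.1 hs hb
        rcases hX ha with h' | h'
        · exact absurd haL h'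
        · exact h'
      · exact Or.inl hb
  | @ex R H hH ih =>
      intro ℓ X b hd h hX
      simp only [ALC.depth] at hd
      obtain ⟨ℓ, rfl⟩ : ∃ l', ℓ = l' + 1 := ⟨ℓ - 1, by omega⟩
      have hup : relUp (M.rolI R) X (H.sem M) := fun a ha => by
        obtain ⟨c, hc1, hc2⟩ := hX ha; exact ⟨c, hc2, hc1⟩
      obtain ⟨Y', hY', b', hbb', hsim⟩ := h.2.1 R (H.sem M) hup
      exact ⟨b', hbb', ih Y' b' (by omega) hsim hY'⟩
  | @all R H hH ih =>
      intro ℓ X b hd h hX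
      simp only [ALC.depth] at hd
      obtain ⟨ℓ, rfl⟩ : ∃ l', ℓ = l' + 1 := ⟨ℓ - 1, by omega⟩
      intro b' hbb'
      obtain ⟨Y, hdown, hsim⟩ := h.2.2.1 R b' hbb'
      refine ih Y b' (by omega) hsim fun y hy => ?_
      obtain ⟨a, ha, hay⟩ := hdown y hy
      exact hX ha y hay
end Aux

section Types
variable {Con Rol D D1 D2 : Type}

/-- The space of depth-`ℓ` types. -/
def TypSp (Con Rol : Type) : ℕ → Type
  | 0 => Set Con
  | ℓ+1 => Set Con × (Rol → Set (TypSp Con Rol ℓ))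

lemma finite_typSp (Con Rol : Type) [Finite Con] [Finite Rol] :
    ∀ ℓ, Finite (TypSp Con Rol ℓ) := by
  intro ℓ
  induction ℓ with
  | zero => exact inferInstanceAs (Finite (Set Con))
  | succ ℓ ih => exact inferInstanceAs (Finite (Set Con × (Rol → Set (TypSp Con Rol ℓ))))

/-- The depth-`ℓ` type of an element. -/
def typ (M : Str Con Rol D) : (ℓ : ℕ) → D → TypSp Con Rol ℓ
  | 0, d => {A | d ∈ M.conI A}
  | ℓ+1, d => ({A | d ∈ M.conI A}, fun R => {t | ∃ c, (d, c) ∈ M.rolI R ∧ typ M ℓ c = t})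

lemma typ_atoms (M : Str Con Rol D) {ℓ : ℕ} {d d' : D} (h : typ M ℓ d = typ M ℓ d') :
    ∀ A, d ∈ M.conI A ↔ d' ∈ M.conI A := by
  intro A
  cases ℓ with
  | zero =>
      have := Set.ext_iff.1 h A
      simpa [typ] using this
  | succ ℓ =>
      have := congrArg Prod.fst h
      have := Set.ext_iff.1 this A
      simpa [typ] using this

lemma typ_succ (M : Str Con Rol D) {ℓ : ℕ} {d d' : D} (h : typ M (ℓ+1) d = typ M (ℓ+1) d')
    (R : Rol) {c : D} (hc : (d, c) ∈ M.rolI R) :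
    ∃ c', (d', c') ∈ M.rolI R ∧ typ M ℓ c' = typ M ℓ c := by
  have h2 := congrFun (congrArg Prod.snd h) R
  have : typ M ℓ c ∈ {t | ∃ c, (d, c) ∈ M.rolI R ∧ typ M ℓ c = t} := ⟨c, hc, rfl⟩
  rw [show ({t | ∃ c, (d, c) ∈ M.rolI R ∧ typ M ℓ c = t} : Set (TypSp Con Rol ℓ))
      = {t | ∃ c, (d', c) ∈ M.rolI R ∧ typ M ℓ c = t} from h2] at this
  exact this

/-- Elements of the same depth-`ℓ` type agree on all concepts of depth at most `ℓ`. -/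
lemma typ_agree (M : Str Con Rol D) :
    ∀ (C : ALC Con Rol) {ℓ : ℕ}, C.depth ≤ ℓ → ∀ {d d' : D}, typ M ℓ d = typ M ℓ d' →
      (d ∈ C.sem M ↔ d' ∈ C.sem M) := by
  intro C
  induction C with
  | top => intro ℓ _ d d' _; simp [ALC.sem]
  | bot => intro ℓ _ d d' _; simp [ALC.sem]
  | atomic A => intro ℓ _ d d' h; exact typ_atoms M h A
  | neg C ih =>
      intro ℓ hd d d' h
      simp only [ALC.depth] at hd
      simp only [ALC.sem, Set.mem_compl_iff]
      exact not_congr (ih hd h)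
  | disj C C' ih ih' =>
      intro ℓ hd d d' h
      simp only [ALC.depth, max_le_iff] at hd
      simp only [ALC.sem, Set.mem_union]
      exact or_congr (ih hd.1 h) (ih' hd.2 h)
  | conj C C' ih ih' =>
      intro ℓ hd d d' h
      simp only [ALC.depth, max_le_iff] at hd
      simp only [ALC.sem, Set.mem_inter_iff]
      exact and_congr (ih hd.1 h) (ih' hd.2 h)
  | impl C C' ih ih' =>
      intro ℓ hd d d' h
      simp only [ALC.depth, max_le_iff] at hd
      simp only [ALC.sem, Set.mem_union, Set.mem_compl_iff]
      exact or_congr (not_congr (ih hd.1 h)) (ih' hd.2 h)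
  | ex R C ih =>
      intro ℓ hd d d' h
      simp only [ALC.depth] at hd
      obtain ⟨ℓ, rfl⟩ : ∃ l', ℓ = l' + 1 := ⟨ℓ - 1, by omega⟩
      constructor
      · rintro ⟨c, hc, hcC⟩
        obtain ⟨c', hc', ht⟩ := typ_succ M h R hc
        exact ⟨c', hc', (ih (by omega) ht).2 hcC⟩
      · rintro ⟨c, hc, hcC⟩
        obtain ⟨c', hc', ht⟩ := typ_succ M h.symm R hc
        exact ⟨c', hc', (ih (by omega) ht).2 hcC⟩
  | all R C ih =>
      intro ℓ hd d d' h
      simp only [ALC.depth] at hd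
      obtain ⟨ℓ, rfl⟩ : ∃ l', ℓ = l' + 1 := ⟨ℓ - 1, by omega⟩
      constructor
      · intro hall c' hc'
        obtain ⟨c, hc, ht⟩ := typ_succ M h.symm R hc'
        exact (ih (by omega) ht).1 (hall c hc)
      · intro hall c hc
        obtain ⟨c', hc', ht⟩ := typ_succ M h R hc
        exact (ih (by omega) ht).1 (hall c' hc')

lemma sem_preimage (M : Str Con Rol D) (C : ALC Con Rol) {ℓ : ℕ} (hd : C.depth ≤ ℓ) :
    C.sem M = typ M ℓ ⁻¹' (typ M ℓ '' C.sem M) := by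
  ext d
  constructor
  · intro h; exact ⟨d, h, rfl⟩
  · rintro ⟨d', hd', ht⟩
    exact (typ_agree M C hd ht.symm).2 hd'

/-- There are only finitely many pairs of extensions of depth-`≤ ℓ` concepts. -/
lemma finite_semPairs [Finite Con] [Finite Rol]
    (M : Str Con Rol D1) (N : Str Con Rol D2) (ℓ : ℕ) :
    {p : Set D1 × Set D2 | ∃ C : ALC Con Rol, C.depth ≤ ℓ ∧ p = (C.sem M, C.sem N)}.Finite := by
  haveI := finite_typSp Con Rol ℓ
  apply Set.Finite.subset (Set.finite_range
    (fun q : Set (TypSp Con Rol ℓ) × Set (TypSp Con Rol ℓ) =>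
      (typ M ℓ ⁻¹' q.1, typ N ℓ ⁻¹' q.2)))
  rintro p ⟨C, hd, rfl⟩
  exact ⟨(typ M ℓ '' C.sem M, typ N ℓ '' C.sem N),
    by simp only []; rw [← sem_preimage M C hd, ← sem_preimage N C hd]⟩
end Types

section Chi
variable {Con Rol D D1 D2 : Type} [Fintype Con] [Fintype Rol]

/-- The characteristic ELU-concept of a depth-`ℓ` type. -/
noncomputable def chi : (ℓ : ℕ) → TypSp Con Rol ℓ → ALC Con Rol
  | 0, s => conjList (s.toFinite.toFinset.toList.map .atomic)
  | ℓ+1, p =>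
      .conj (conjList (p.1.toFinite.toFinset.toList.map .atomic))
        (conjList ((Finset.univ : Finset Rol).toList.flatMap fun R =>
          (haveI := finite_typSp Con Rol ℓ
           ((p.2 R).toFinite.toFinset.toList).map fun t => ALC.ex R (chi ℓ t))))

lemma chi_isELU : ∀ (ℓ : ℕ) (t : TypSp Con Rol ℓ), (chi ℓ t).IsELU := by
  intro ℓ
  induction ℓ with
  | zero =>
      intro t
      apply conjList_isELU
      intro C hC
      simp only [List.mem_map] at hC
      obtain ⟨A, _, rfl⟩ := hC
      exact .atomic A
  | succ ℓ ih =>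
      intro t
      refine .conj (conjList_isELU _ ?_) (conjList_isELU _ ?_)
      · intro C hC
        simp only [List.mem_map] at hC
        obtain ⟨A, _, rfl⟩ := hC
        exact .atomic A
      · intro C hC
        simp only [List.mem_flatMap, List.mem_map] at hC
        obtain ⟨R, _, t', _, rfl⟩ := hC
        exact .ex R (ih t')

lemma chi_depth : ∀ (ℓ : ℕ) (t : TypSp Con Rol ℓ), (chi ℓ t).depth ≤ ℓ := by
  intro ℓ
  induction ℓ with
  | zero =>
      intro t
      apply conjList_depth
      intro C hC
      simp only [List.mem_map] at hC
      obtain ⟨A, _, rfl⟩ := hC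
      exact le_refl _
  | succ ℓ ih =>
      intro t
      simp only [chi, ALC.depth, max_le_iff]
      constructor
      · refine le_trans (conjList_depth _ 0 ?_) (by omega)
        intro C hC
        simp only [List.mem_map] at hC
        obtain ⟨A, _, rfl⟩ := hC
        exact le_refl _
      · apply conjList_depth
        intro C hC
        simp only [List.mem_flatMap, List.mem_map] at hC
        obtain ⟨R, _, t', _, rfl⟩ := hC
        simp only [ALC.depth]
        exact Nat.succ_le_succ (ih t')

/-- Every element satisfies its own characteristic concept. -/
lemma chi_self (N : Str Con Rol D2) : ∀ (ℓ : ℕ) (d : D2), d ∈ (chi ℓ (typ N ℓ d)).sem N := by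
  intro ℓ
  induction ℓ with
  | zero =>
      intro d
      rw [chi, conjList_sem]
      intro C hC
      simp only [List.mem_map, Set.Finite.mem_toFinset, Finset.mem_toList] at hC
      obtain ⟨A, hA, rfl⟩ := hC
      have := (Set.Finite.mem_toFinset (hs := _)).1 hA; exact this
  | succ ℓ ih =>
      intro d
      refine ⟨?_, ?_⟩
      · rw [conjList_sem]
        intro C hC
        simp only [List.mem_map, Set.Finite.mem_toFinset, Finset.mem_toList] at hC
        obtain ⟨A, hA, rfl⟩ := hC
        exact hA
      · rw [conjList_sem]
        intro C hC
        simp only [List.mem_flatMap, List.mem_map, Set.Finite.mem_toFinset,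
          Finset.mem_toList] at hC
        obtain ⟨R, _, t', ht', rfl⟩ := hC
        obtain ⟨c, hc, rfl⟩ := ht'
        exact ⟨c, hc, ih c⟩

/-- Satisfying the characteristic concept of `d` implies being `ℓ`-round simulated. -/
lemma chi_sim (N : Str Con Rol D2) (M : Str Con Rol D1) :
    ∀ (ℓ : ℕ) (d : D2) (y : D1), y ∈ (chi ℓ (typ N ℓ d)).sem M → SimL N M ℓ d y := by
  intro ℓ
  induction ℓ with
  | zero =>
      intro d y hy A hA
      rw [chi, conjList_sem] at hy
      refine hy (.atomic A) ?_
      simp only [List.mem_map, Set.Finite.mem_toFinset, Finset.mem_toList]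
      exact ⟨A, (Set.Finite.mem_toFinset (hs := _)).2 hA, rfl⟩
  | succ ℓ ih =>
      intro d y hy
      obtain ⟨hy1, hy2⟩ := hy
      constructor
      · intro A hA
        rw [conjList_sem] at hy1
        refine hy1 (.atomic A) ?_
        simp only [List.mem_map, Set.Finite.mem_toFinset, Finset.mem_toList]
        exact ⟨A, hA, rfl⟩
      · intro R c hc
        rw [conjList_sem] at hy2
        have hmem : ALC.ex R (chi ℓ (typ N ℓ c)) ∈
            (Finset.univ : Finset Rol).toList.flatMap fun R =>
              (haveI := finite_typSp Con Rol ℓ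
               (((typ N (ℓ+1) d).2 R).toFinite.toFinset.toList).map
                fun t => ALC.ex R (chi ℓ t)) := by
          simp only [List.mem_flatMap, List.mem_map, Set.Finite.mem_toFinset, Finset.mem_toList]
          exact ⟨R, by simp, typ N ℓ c, ⟨c, hc, rfl⟩, rfl⟩
        obtain ⟨y', hyy', hy'⟩ := hy2 _ hmem
        exact ⟨y', hyy', ih c y' hy'⟩
end Chi

section Complete
variable {Con Rol D1 D2 : Type} [Fintype Con] [Fintype Rol]

lemma horn_completeL (M : Str Con Rol D1) (N : Str Con Rol D2) :
    ∀ (ℓ : ℕ) (X : Set D1) (b : D2), X.Nonempty → leHornDepth M N ℓ X b →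
      (∀ a ∈ X, SimL N M ℓ b a) → HornSimL M N ℓ X b := by
  intro ℓ
  induction ℓ with
  | zero =>
      intro X b hne hle hsim
      exact ⟨hne, fun A hA => hle (.atomic A) (.atomic A) (le_refl _) hA, hsim⟩
  | succ ℓ ih =>
      intro X b hne hle hsim
      have atoms : ∀ A, X ⊆ M.conI A → b ∈ N.conI A := fun A hA =>
        hle (.atomic A) (.atomic A) (by simp [ALC.depth]) hA
      refine ⟨⟨hne, atoms, fun a ha => simL_mono N M (Nat.zero_le _) (hsim a ha)⟩, ?_, ?_, hsim⟩
      · -- forth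
        intro R Y hup
        by_contra hcon
        push_neg at hcon
        -- for each successor, a horn concept of depth ≤ ℓ separating it from Y
        have key : ∀ b', (b, b') ∈ N.rolI R →
            ∃ C : ALC Con Rol, C.depth ≤ ℓ ∧ C.IsHorn ∧ Y ⊆ C.sem M ∧ b' ∉ C.sem N := by
          intro b' hbb'
          set Y' : Set D1 := Y ∩ {y | SimL N M ℓ b' y} with hY'def
          have hnotsim : ¬ HornSimL M N ℓ Y' b' := hcon Y' Set.inter_subset_left b' hbb'
          have hsim' : ∀ y ∈ Y', SimL N M ℓ b' y := fun y hy => hy.2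
          by_cases hne' : Y'.Nonempty
          · have hnle : ¬ leHornDepth M N ℓ Y' b' := fun hle' =>
              hnotsim (ih Y' b' hne' hle' hsim')
            rw [leHornDepth] at hnle
            push_neg at hnle
            obtain ⟨C, hC, hdC, hYC, hbC⟩ := hnle
            refine ⟨.impl (chi ℓ (typ N ℓ b')) C, ?_, .impl (chi_isELU ℓ _) hC, ?_, ?_⟩
            · simp only [ALC.depth, max_le_iff]
              exact ⟨chi_depth ℓ _, hdC⟩
            · intro y hy
              by_cases hchi : y ∈ (chi ℓ (typ N ℓ b')).sem M
              · exact Or.inr (hYC ⟨hy, chi_sim N M ℓ b' y hchi⟩)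
              · exact Or.inl hchi
            · intro hmem
              rcases hmem with h | h
              · exact h (chi_self N ℓ b')
              · exact hbC h
          · refine ⟨.impl (chi ℓ (typ N ℓ b')) .bot, ?_, .impl (chi_isELU ℓ _) .bot, ?_, ?_⟩
            · simp only [ALC.depth, max_le_iff]
              exact ⟨chi_depth ℓ _, Nat.zero_le _⟩
            · intro y hy
              by_cases hchi : y ∈ (chi ℓ (typ N ℓ b')).sem M
              · exact absurd ⟨y, hy, chi_sim N M ℓ b' y hchi⟩ hne'
              · exact Or.inl hchi
            · intro hmem
              rcases hmem with h | h
              · exact h (chi_self N ℓ b')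
              · exact h
        -- collect finitely many representative concepts
        set S : Set (Set D1 × Set D2) :=
          {p | ∃ C : ALC Con Rol, C.depth ≤ ℓ ∧ C.IsHorn ∧ Y ⊆ C.sem M ∧
            p = (C.sem M, C.sem N)} with hSdef
        have hSfin : S.Finite := by
          apply Set.Finite.subset (finite_semPairs M N ℓ)
          rintro p ⟨C, h1, _, _, h4⟩
          exact ⟨C, h1, h4⟩
        have hrep : ∀ p ∈ hSfin.toFinset, ∃ C : ALC Con Rol,
            C.depth ≤ ℓ ∧ C.IsHorn ∧ Y ⊆ C.sem M ∧ p = (C.sem M, C.sem N) := by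
          intro p hp
          rw [Set.Finite.mem_toFinset] at hp
          exact hp
        choose rep hrep1 hrep2 hrep3 hrep4 using hrep
        set L : List (ALC Con Rol) :=
          hSfin.toFinset.attach.toList.map (fun p => rep p.1 p.2) with hLdef
        have hG : b ∈ (ALC.ex R (conjList L)).sem N := by
          apply hle
          · refine .ex R (conjList_isHorn L ?_)
            intro C hC
            simp only [hLdef, List.mem_map, Finset.mem_attach, true_and,
              List.mem_attach] at hC
            obtain ⟨p, _, rfl⟩ := hC
            exact hrep2 p.1 p.2
          · simp only [ALC.depth]
            refine Nat.succ_le_succ (conjList_depth L ℓ ?_)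
            intro C hC
            simp only [hLdef, List.mem_map] at hC
            obtain ⟨p, _, rfl⟩ := hC
            exact hrep1 p.1 p.2
          · intro a ha
            obtain ⟨y, hyY, hay⟩ := hup a ha
            refine ⟨y, hay, ?_⟩
            rw [conjList_sem]
            intro C hC
            simp only [hLdef, List.mem_map] at hC
            obtain ⟨p, _, rfl⟩ := hC
            exact hrep3 p.1 p.2 hyY
        obtain ⟨b', hbb', hb'⟩ := hG
        obtain ⟨C₀, hd₀, hh₀, hY₀, hb₀⟩ := key b' hbb'
        have hp₀ : (C₀.sem M, C₀.sem N) ∈ hSfin.toFinset := by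
          rw [Set.Finite.mem_toFinset]
          exact ⟨C₀, hd₀, hh₀, hY₀, rfl⟩
        rw [conjList_sem] at hb'
        have hrepmem : rep _ hp₀ ∈ L := by
          simp only [hLdef, List.mem_map]
          exact ⟨⟨(C₀.sem M, C₀.sem N), hp₀⟩, Finset.mem_toList.2 (Finset.mem_attach _ _), rfl⟩
        have := hb' _ hrepmem
        have hsemN : (rep _ hp₀).sem N = C₀.sem N :=
          (congrArg Prod.snd (hrep4 _ hp₀)).symm
        rw [hsemN] at this
        exact hb₀ this
      · -- back
        intro R b' hbb'
        set Y : Set D1 := {y | (∃ a ∈ X, (a, y) ∈ M.rolI R) ∧ SimL N M ℓ b' y} with hYdef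
        have hle' : leHornDepth M N ℓ Y b' := by
          intro C hC hdC hYC
          have hG : b ∈ (ALC.all R (.impl (chi ℓ (typ N ℓ b')) C)).sem N := by
            apply hle
            · exact .all R (.impl (chi_isELU ℓ _) hC)
            · simp only [ALC.depth]
              exact Nat.succ_le_succ (max_le (chi_depth ℓ _) hdC)
            · intro a ha y hay
              by_cases hchi : y ∈ (chi ℓ (typ N ℓ b')).sem M
              · exact Or.inr (hYC ⟨⟨a, ha, hay⟩, chi_sim N M ℓ b' y hchi⟩)
              · exact Or.inl hchi
          have := hG b' hbb'
          rcases this with h | h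
          · exact absurd (chi_self N ℓ b') h
          · exact h
        have hYne : Y.Nonempty := by
          by_contra hYe
          rw [Set.not_nonempty_iff_eq_empty] at hYe
          exact hle' .bot .bot (Nat.zero_le _) (by rw [hYe]; exact Set.empty_subset _)
        refine ⟨Y, fun y hy => hy.1, ih Y b' hYne hle' fun y hy => hy.2⟩
end Complete

section FiniteCase
variable {Con Rol D1 D2 : Type}

/-- Full soundness: Horn simulations preserve hornALC-concepts. -/
lemma horn_sound (M : Str Con Rol D1) (N : Str Con Rol D2) :
    ∀ {C : ALC Con Rol}, C.IsHorn → ∀ {Z : Set (Set D1 × D2)}, IsHornSim M N Z →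
      ∀ (X : Set D1) (b : D2), (X, b) ∈ Z → X ⊆ C.sem M → b ∈ C.sem N := by
  intro C hC
  induction hC with
  | bot =>
      intro Z hZ X b hXb hX
      obtain ⟨a, ha⟩ := (hZ X b hXb).1
      exact absurd (hX ha) (Set.notMem_empty a)
  | top => intro Z hZ X b _ _; trivial
  | atomic A => intro Z hZ X b hXb hX; exact (hZ X b hXb).2.1 A hX
  | conj h1 h2 ih1 ih2 =>
      intro Z hZ X b hXb hX
      exact ⟨ih1 hZ X b hXb fun a ha => (hX ha).1, ih2 hZ X b hXb fun a ha => (hX ha).2⟩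
  | @impl L H hL hH ih =>
      intro Z hZ X b hXb hX
      rw [ALC.sem]
      by_cases hb : b ∈ L.sem N
      · refine Or.inr (ih hZ X b hXb fun a ha => ?_)
        have hs := (hZ X b hXb).2.2.2.2 a ha
        have haL : a ∈ L.sem M := elu_pres N M hL hs hb
        rcases hX ha with h' | h'
        · exact absurd haL h'
        · exact h'
      · exact Or.inl hb
  | @ex R H hH ih =>
      intro Z hZ X b hXb hX
      have hup : relUp (M.rolI R) X (H.sem M) := fun a ha => by
        obtain ⟨c, hc1, hc2⟩ := hX ha; exact ⟨c, hc2, hc1⟩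
      obtain ⟨Y', hY', b', hbb', hZ'⟩ := (hZ X b hXb).2.2.1 R (H.sem M) hup
      exact ⟨b', hbb', ih hZ Y' b' hZ' hY'⟩
  | @all R H hH ih =>
      intro Z hZ X b hXb hX
      intro b' hbb'
      obtain ⟨Y, hdown, hZ'⟩ := (hZ X b hXb).2.2.2.1 R b' hbb'
      refine ih hZ Y b' hZ' fun y hy => ?_
      obtain ⟨a, ha, hay⟩ := hdown y hy
      exact hX ha y hay

/-- `HornSimL` is antitone in the number of rounds (one step). -/
lemma hornSimL_step (M : Str Con Rol D1) (N : Str Con Rol D2) :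
    ∀ (ℓ : ℕ) (X : Set D1) (b : D2), HornSimL M N (ℓ + 1) X b → HornSimL M N ℓ X b := by
  intro ℓ
  induction ℓ with
  | zero => intro X b h; exact h.1
  | succ ℓ ih =>
      intro X b h
      refine ⟨h.1, ?_, ?_, fun a ha => simL_mono N M (by omega) (h.2.2.2 a ha)⟩
      · intro R Y hup
        obtain ⟨Y', hY', b', hbb', hs⟩ := h.2.1 R Y hup
        exact ⟨Y', hY', b', hbb', ih Y' b' hs⟩
      · intro R b' hbb'
        obtain ⟨Y, hdown, hs⟩ := h.2.2.1 R b' hbb'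
        exact ⟨Y, hdown, ih Y b' hs⟩

lemma hornSimL_anti (M : Str Con Rol D1) (N : Str Con Rol D2) {k l : ℕ} (hkl : k ≤ l)
    {X : Set D1} {b : D2} (h : HornSimL M N l X b) : HornSimL M N k X b := by
  induction l with
  | zero => obtain rfl : k = 0 := by omega
            exact h
  | succ l ih =>
      rcases Nat.eq_or_lt_of_le hkl with rfl | hlt
      · exact h
      · exact ih (by omega) (hornSimL_step M N l X b h)

/-- Pigeonhole: a decreasing family of satisfiable conditions over a finite type has a
common solution. -/
lemma pigeon {β : Type} [Finite β] (Q : ℕ → β → Prop)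
    (mono : ∀ y k l, k ≤ l → Q l y → Q k y) (h : ∀ ℓ, ∃ y, Q ℓ y) : ∃ y, ∀ ℓ, Q ℓ y := by
  by_contra hcon
  push_neg at hcon
  choose f hf using hcon
  cases nonempty_fintype β
  set L := Finset.univ.sup f with hL
  obtain ⟨y, hy⟩ := h L
  exact hf y (mono y (f y) L (Finset.le_sup (Finset.mem_univ y)) hy)

/-- Over finite structures, simulation in all finite rounds yields a simulation. -/
lemma sim_of_simL [Finite D1] (N : Str Con Rol D2) (M : Str Con Rol D1)
    {b : D2} {a : D1} (h : ∀ ℓ, SimL N M ℓ b a) : Sim N M b a := by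
  refine ⟨{p : D2 × D1 | ∀ ℓ, SimL N M ℓ p.1 p.2}, ?_, h⟩
  intro b' a' hp
  refine ⟨fun A hA => hp 0 A hA, ?_⟩
  intro R b'' hb''
  have hex : ∀ ℓ, ∃ a'', (a', a'') ∈ M.rolI R ∧ SimL N M ℓ b'' a'' := fun ℓ =>
    (hp (ℓ + 1)).2 R b'' hb''
  obtain ⟨a'', ha''⟩ := pigeon (fun ℓ a'' => (a', a'') ∈ M.rolI R ∧ SimL N M ℓ b'' a'')
    (fun y k l hkl hq => ⟨hq.1, simL_mono N M hkl hq.2⟩) hex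
  exact ⟨a'', (ha'' 0).1, fun ℓ => (ha'' ℓ).2⟩

/-- Over finite structures, Horn simulation in all finite rounds yields a Horn simulation. -/
lemma hornSim_of_hornSimL [Finite D1] [Finite D2] (M : Str Con Rol D1) (N : Str Con Rol D2)
    {X : Set D1} {b : D2} (h : ∀ ℓ, HornSimL M N ℓ X b) : HornSim M N X b := by
  refine ⟨{q : Set D1 × D2 | ∀ ℓ, HornSimL M N ℓ q.1 q.2}, ?_, h⟩
  intro X' b' hq
  refine ⟨(hornSimL_base M N (hq 0)).1, (hornSimL_base M N (hq 0)).2.1, ?_, ?_, ?_⟩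
  · intro R Y hup
    have hex : ∀ ℓ, ∃ p : Set D1 × D2, p.1 ⊆ Y ∧ (b', p.2) ∈ N.rolI R ∧
        HornSimL M N ℓ p.1 p.2 := by
      intro ℓ
      obtain ⟨Y', hY', b'', hb'', hs⟩ := (hq (ℓ + 1)).2.1 R Y hup
      exact ⟨(Y', b''), hY', hb'', hs⟩
    obtain ⟨p, hps⟩ := pigeon _
      (fun p k l hkl hp => ⟨hp.1, hp.2.1, hornSimL_anti M N hkl hp.2.2⟩) hex
    exact ⟨p.1, (hps 0).1, p.2, (hps 0).2.1, fun ℓ => (hps ℓ).2.2⟩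
  · intro R b'' hb''
    have hex : ∀ ℓ, ∃ Y : Set D1, relDown (M.rolI R) X' Y ∧ HornSimL M N ℓ Y b'' := fun ℓ =>
      (hq (ℓ + 1)).2.2.1 R b'' hb''
    obtain ⟨Y, hYs⟩ := pigeon _
      (fun Y k l hkl hp => ⟨hp.1, hornSimL_anti M N hkl hp.2⟩) hex
    exact ⟨Y, (hYs 0).1, fun ℓ => (hYs ℓ).2⟩
  · intro a ha
    exact sim_of_simL N M fun ℓ => (hornSimL_base M N (hq ℓ)).2.2 a ha
end FiniteCase

/-- **Ehrenfeucht–Fraïssé game for hornALC.**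
For any finite vocabulary τ, pointed τ-structures `𝔄,a` and `𝔅,b`, and any `ℓ < ω`:
`𝔄,a ≤^ℓ_hornALC 𝔅,b` iff `𝔄,{a} ⪯^ℓ_horn 𝔅,b`.  Thus `𝔄,a ≤_hornALC 𝔅,b` iff
`𝔄,{a} ⪯^ℓ_horn 𝔅,b` for all `ℓ`.  If `𝔄` and `𝔅` are finite, then
`𝔄,a ≤_hornALC 𝔅,b` iff `𝔄,{a} ⪯_horn 𝔅,b`. -/
theorem hornALC_ef_game {Con Rol : Type} [Fintype Con] [Fintype Rol]
    {D1 D2 : Type} [Nonempty D1] [Nonempty D2]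
    (M : Str Con Rol D1) (N : Str Con Rol D2) (a : D1) (b : D2) :
    (∀ ℓ : ℕ, leHornDepth M N ℓ {a} b ↔ HornSimL M N ℓ {a} b) ∧
    (leHorn M N {a} b ↔ ∀ ℓ : ℕ, HornSimL M N ℓ {a} b) ∧
    (Finite D1 → Finite D2 → (leHorn M N {a} b ↔ HornSim M N {a} b)) := by
  have part1 : ∀ ℓ : ℕ, leHornDepth M N ℓ {a} b ↔ HornSimL M N ℓ {a} b := by
    intro ℓ
    constructor
    · intro hle
      have hchi : a ∈ (chi ℓ (typ N ℓ b)).sem M := by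
        by_contra hchi
        have hb := hle (.impl (chi ℓ (typ N ℓ b)) .bot) (.impl (chi_isELU ℓ _) .bot)
          (by simpa [ALC.depth] using chi_depth ℓ (typ N ℓ b))
          (by intro x hx
              rw [Set.mem_singleton_iff] at hx
              subst hx
              exact Or.inl hchi)
        rcases hb with h | h
        · exact h (chi_self N ℓ b)
        · exact h
      have hsim : SimL N M ℓ b a := chi_sim N M ℓ b a hchi
      refine horn_completeL M N ℓ {a} b ⟨a, rfl⟩ hle ?_
      intro a' ha'
      rw [Set.mem_singleton_iff] at ha'
      subst ha'
      exact hsim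
    · intro h C hC hd hX
      exact horn_soundL M N hC {a} b hd h hX
  refine ⟨part1, ?_, ?_⟩
  · constructor
    · intro hle ℓ
      exact (part1 ℓ).1 fun C hC _ hX => hle C hC hX
    · intro hall C hC hX
      exact horn_soundL M N hC {a} b (le_refl C.depth) (hall C.depth) hX
  · intro hf1 hf2
    constructor
    · intro hle
      exact hornSim_of_hornSimL M N fun ℓ => (part1 ℓ).1 (fun C hC _ hX => hle C hC hX)
    · rintro ⟨Z, hZ, hab⟩ C hC hX
      exact horn_sound M N hC hZ {a} b hab hX
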